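/- For any k >= d, the least squares estimator computed from a size-k volume-rescaled sample with conditionally sampled responses is unbiased: E_{VS^k_D}[w*(S)] = Sigma^{-1} E_D[x y]. -/

import Mathlib

open MeasureTheory Matrix

section VSaux

lemma psdDetNonneg {n : Type*} [Fintype n] [DecidableEq n] {M : Matrix n n ℝ}
    (h : M.PosSemidef) : 0 ≤ M.det := by
  rw [h.1.det_eq_prod_eigenvalues]
  exact Finset.prod_nonneg fun i _ => by exact_mod_cast h.eigenvalues_nonneg i

lemma detXtX_nonneg {k d : ℕ} (X : Matrix (Fin k) (Fin d) ℝ) : 0 ≤ (Xᵀ * X).det := by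
  have h := Matrix.posSemidef_conjTranspose_mul_self X
  rw [Matrix.conjTranspose_eq_transpose_of_trivial] at h
  exact psdDetNonneg h

lemma hadjX {k d : ℕ} (X : Matrix (Fin k) (Fin d) ℝ) :
    ((Xᵀ * X).det • (Xᵀ * X)⁻¹) * Xᵀ = (Xᵀ * X).adjugate * Xᵀ := by
  by_cases h : IsUnit (Xᵀ * X).det
  · rw [Matrix.inv_def, smul_smul, Ring.mul_inverse_cancel _ h, one_smul]
  · rw [Matrix.nonsing_inv_apply_not_isUnit _ h, smul_zero, Matrix.zero_mul]
    have hd : (Xᵀ * X).det = 0 := by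
      by_contra hne
      exact h (isUnit_iff_ne_zero.mpr hne)
    have h0 : (Xᵀ * X).adjugate * (Xᴴ * X) = 0 := by
      rw [Matrix.conjTranspose_eq_transpose_of_trivial, Matrix.adjugate_mul, hd, zero_smul]
    have h1 := (Matrix.mul_conjTranspose_mul_self_eq_zero X _).mp h0
    rw [Matrix.conjTranspose_eq_transpose_of_trivial] at h1
    exact h1.symm

lemma hupdX {k d : ℕ} (X : Matrix (Fin k) (Fin d) ℝ) (y : Fin k → ℝ) (i : Fin d) :
    (Xᵀ * X).updateCol i (Xᵀ *ᵥ y) = Xᵀ * (X.updateCol i y) := by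
  ext a c
  by_cases hc : c = i <;>
    simp [Matrix.updateCol_apply, Matrix.mul_apply, Matrix.mulVec, dotProduct, hc]

lemma detExpand {k d : ℕ} (X N : Matrix (Fin k) (Fin d) ℝ) :
    (Xᵀ * N).det = ∑ t : Fin d → Fin k, ∑ σ : Equiv.Perm (Fin d),
      ((Equiv.Perm.sign σ : ℤ) : ℝ) * ∏ c, (X (t c) (σ c) * N (t c) c) := by
  rw [Matrix.det_apply']
  have h1 : ∀ σ : Equiv.Perm (Fin d),
      ∏ c, (Xᵀ * N) (σ c) c = ∑ t : Fin d → Fin k, ∏ c, (X (t c) (σ c) * N (t c) c) := by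
    intro σ
    simp_rw [Matrix.mul_apply, Matrix.transpose_apply]
    rw [Finset.prod_univ_sum]
    simp
  simp_rw [h1, Finset.mul_sum]
  exact Finset.sum_comm

lemma sigmaSum {k d : ℕ} (X N : Matrix (Fin k) (Fin d) ℝ) (t : Fin d → Fin k) :
    ∑ σ : Equiv.Perm (Fin d), ((Equiv.Perm.sign σ : ℤ) : ℝ) * ∏ c, (X (t c) (σ c) * N (t c) c)
      = (Matrix.of fun a c => X (t c) a).det * ∏ c, N (t c) c := by
  rw [Matrix.det_apply', Finset.sum_mul]
  refine Finset.sum_congr rfl fun σ _ => ?_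
  rw [Finset.prod_mul_distrib, ← mul_assoc]
  simp [Matrix.of_apply]

lemma detZeroOfNotInj {k d : ℕ} (X : Matrix (Fin k) (Fin d) ℝ) (t : Fin d → Fin k)
    (ht : ¬ Function.Injective t) : (Matrix.of fun a c => X (t c) a).det = 0 := by
  rw [Function.not_injective_iff] at ht
  obtain ⟨c, c', h1, h2⟩ := ht
  exact Matrix.det_zero_of_column_eq h2 fun r => by simp [h1]

lemma cardInj {d k : ℕ} :
    (Finset.univ.filter fun t : Fin d → Fin k => Function.Injective t).card
      = d.factorial * k.choose d := by
  rw [← Fintype.card_subtype,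
    Fintype.card_congr (Equiv.subtypeInjectiveEquivEmbedding (Fin d) (Fin k))]
  rw [Fintype.card_embedding_eq]
  simp [Nat.descFactorial_eq_factorial_mul_choose]

lemma prodInj {E : Type*} [MeasurableSpace E] {D : Measure E} [IsProbabilityMeasure D]
    {d k : ℕ} {t : Fin d → Fin k} (ht : Function.Injective t) {g : Fin d → E → ℝ}
    (hg : ∀ c, Integrable (g c) D) :
    Integrable (fun S : Fin k → E => ∏ c, g c (S (t c))) (Measure.pi fun _ => D) ∧
    ∫ S : Fin k → E, ∏ c, g c (S (t c)) ∂(Measure.pi fun _ => D) = ∏ c, ∫ x, g c x ∂D := by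
  classical
  letI : MeasureSpace E := ⟨D⟩
  haveI : IsProbabilityMeasure (volume : Measure E) := inferInstanceAs (IsProbabilityMeasure D)
  set h : Fin k → E → ℝ := fun l x => if hc : ∃ c, t c = l then g (Classical.choose hc) x else 1
    with hh
  have hht : ∀ c, h (t c) = g c := by
    intro c; funext x
    have hex : ∃ c', t c' = t c := ⟨c, rfl⟩
    simp only [hh]
    rw [dif_pos hex]
    congr 1
    exact ht (Classical.choose_spec hex)
  have hone : ∀ l, (¬ ∃ c, t c = l) → h l = fun _ => 1 := by
    intro l hl; funext x; simp only [hh]; rw [dif_neg hl]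
  have key : ∀ F : Fin k → ℝ, (∀ l, (¬ ∃ c, t c = l) → F l = 1) → ∏ l, F l = ∏ c, F (t c) := by
    intro F hF
    rw [← Finset.prod_subset (Finset.subset_univ (Finset.univ.image t))
        (fun l _ hl => hF l (by simpa [Finset.mem_image, eq_comm] using hl)),
      Finset.prod_image (fun c _ c' _ hcc => ht hcc)]
  have hprod : ∀ S : Fin k → E, ∏ c, g c (S (t c)) = ∏ l, h l (S l) := by
    intro S
    rw [key (fun l => h l (S l)) (fun l hl => by show h l (S l) = 1; rw [hone l hl])]
    exact Finset.prod_congr rfl fun c _ => by rw [hht c]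
  have hhint : ∀ l, Integrable (h l) (volume : Measure E) := by
    intro l
    by_cases hc : ∃ c, t c = l
    · obtain ⟨c, rfl⟩ := hc; rw [hht c]; exact hg c
    · rw [hone l hc]; exact integrable_const 1
  constructor
  · have h1 : Integrable (fun S : Fin k → E => ∏ l, h l (S l))
        (Measure.pi fun _ => D) := Integrable.fintype_prod hhint
    simpa only [← hprod] using h1
  · have h2 : (∫ S : Fin k → E, ∏ l, h l (S l) ∂(Measure.pi fun _ => D))
        = ∏ l, ∫ x, h l x ∂D := integral_fintype_prod_eq_prod h
    rw [show (fun S : Fin k → E => ∏ c, g c (S (t c)))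
        = fun S => ∏ l, h l (S l) from funext hprod, h2,
      key (fun l => ∫ x, h l x ∂D) (fun l hl => by
        show (∫ x, h l x ∂D) = 1; rw [hone l hl]; simp)]
    exact Finset.prod_congr rfl fun c _ => by rw [hht c]

lemma coreInt {d k : ℕ} (D : Measure ((Fin d → ℝ) × ℝ)) [IsProbabilityMeasure D]
    (hx2 : ∀ a b : Fin d, Integrable (fun p => p.1 a * p.1 b) D)
    (hxy : ∀ a : Fin d, Integrable (fun p => p.1 a * p.2) D)
    (i : Fin d) (B : Matrix (Fin d) (Fin d) ℝ)
    (hB : ∀ a c, B a c = if c = i then (∫ p, p.1 a * p.2 ∂D) else ∫ p, p.1 a * p.1 c ∂D) :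
    Integrable (fun S : Fin k → (Fin d → ℝ) × ℝ =>
        ((Matrix.of fun τ => (S τ).1)ᵀ *
          ((Matrix.of fun τ => (S τ).1).updateCol i fun τ => (S τ).2)).det)
      (Measure.pi fun _ => D) ∧
    (∫ S : Fin k → (Fin d → ℝ) × ℝ,
        ((Matrix.of fun τ => (S τ).1)ᵀ *
          ((Matrix.of fun τ => (S τ).1).updateCol i fun τ => (S τ).2)).det
      ∂(Measure.pi fun _ => D))
      = (d.factorial * k.choose d : ℕ) * B.det := by
  classical
  set Ep := (Fin d → ℝ) × ℝ
  set μ : Measure (Fin k → Ep) := Measure.pi fun _ => D with hμ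
  set g : Equiv.Perm (Fin d) → Fin d → Ep → ℝ :=
    fun σ c p => p.1 (σ c) * (if c = i then p.2 else p.1 c) with hg
  have hgint : ∀ σ c, Integrable (g σ c) D := by
    intro σ c
    by_cases hc : c = i
    · subst hc; simpa [hg] using hxy (σ c)
    · simpa [hg, hc] using hx2 (σ c) c
  have hgval : ∀ σ c, (∫ p, g σ c p ∂D) = B (σ c) c := by
    intro σ c
    by_cases hc : c = i
    · subst hc; rw [hB]; simp [hg]
    · rw [hB]; simp [hg, hc]
  have hrepr : ∀ S : Fin k → Ep,
      ((Matrix.of fun τ => (S τ).1)ᵀ *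
        ((Matrix.of fun τ => (S τ).1).updateCol i fun τ => (S τ).2)).det
      = ∑ t : Fin d → Fin k, ∑ σ : Equiv.Perm (Fin d),
          ((Equiv.Perm.sign σ : ℤ) : ℝ) * ∏ c, g σ c (S (t c)) := by
    intro S
    rw [detExpand]
    refine Finset.sum_congr rfl fun t _ => Finset.sum_congr rfl fun σ _ => ?_
    congr 1
    refine Finset.prod_congr rfl fun c _ => ?_
    simp [Matrix.updateCol_apply, hg]
  set F : (Fin d → Fin k) → (Fin k → Ep) → ℝ :=
    fun t S => ∑ σ : Equiv.Perm (Fin d), ((Equiv.Perm.sign σ : ℤ) : ℝ) * ∏ c, g σ c (S (t c))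
    with hF
  have hFzero : ∀ t, ¬ Function.Injective t → F t = fun _ => 0 := by
    intro t ht
    funext S
    have : F t S = ∑ σ : Equiv.Perm (Fin d), ((Equiv.Perm.sign σ : ℤ) : ℝ) *
        ∏ c, ((Matrix.of fun τ => (S τ).1) (t c) (σ c) *
          ((Matrix.of fun τ => (S τ).1).updateCol i fun τ => (S τ).2) (t c) c) := by
      rw [hF]
      refine Finset.sum_congr rfl fun σ _ => ?_
      congr 1
      refine Finset.prod_congr rfl fun c _ => ?_
      simp [Matrix.updateCol_apply, hg]
    rw [this, sigmaSum, detZeroOfNotInj _ _ ht, zero_mul]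
  have hFint : ∀ t, Integrable (F t) μ := by
    intro t
    by_cases ht : Function.Injective t
    · exact integrable_finset_sum _ fun σ _ => ((prodInj ht (hgint σ)).1).const_mul _
    · rw [hFzero t ht]; exact integrable_zero _ _ _
  have hFval : ∀ t, (∫ S, F t S ∂μ) = if Function.Injective t then B.det else 0 := by
    intro t
    by_cases ht : Function.Injective t
    · rw [if_pos ht, hF]
      rw [integral_finset_sum _ fun σ _ => ((prodInj ht (hgint σ)).1).const_mul _]
      have : ∀ σ : Equiv.Perm (Fin d),
          (∫ S, ((Equiv.Perm.sign σ : ℤ) : ℝ) * ∏ c, g σ c (S (t c)) ∂μ)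
          = ((Equiv.Perm.sign σ : ℤ) : ℝ) * ∏ c, B (σ c) c := by
        intro σ
        rw [integral_const_mul, (prodInj ht (hgint σ)).2]
        exact congrArg _ (Finset.prod_congr rfl fun c _ => hgval σ c)
      refine (Finset.sum_congr rfl fun σ _ => this σ).trans ?_
      rw [Matrix.det_apply']
    · rw [if_neg ht, hFzero t ht]
      simp
  constructor
  · rw [show (fun S : Fin k → Ep =>
        ((Matrix.of fun τ => (S τ).1)ᵀ *
          ((Matrix.of fun τ => (S τ).1).updateCol i fun τ => (S τ).2)).det)
        = fun S => ∑ t : Fin d → Fin k, F t S from funext hrepr]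
    exact integrable_finset_sum _ fun t _ => hFint t
  · rw [show (fun S : Fin k → Ep =>
        ((Matrix.of fun τ => (S τ).1)ᵀ *
          ((Matrix.of fun τ => (S τ).1).updateCol i fun τ => (S τ).2)).det)
        = fun S => ∑ t : Fin d → Fin k, F t S from funext hrepr]
    rw [integral_finset_sum _ fun t _ => hFint t]
    simp_rw [hFval]
    rw [← Finset.sum_filter, Finset.sum_const, cardInj, nsmul_eq_mul]

lemma intXY {d : ℕ} {D : Measure ((Fin d → ℝ) × ℝ)}
    (hx2 : ∀ a b : Fin d, Integrable (fun p => p.1 a * p.1 b) D)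
    (hy2 : Integrable (fun p => p.2 ^ 2) D) (a : Fin d) :
    Integrable (fun p : (Fin d → ℝ) × ℝ => p.1 a * p.2) D := by
  have hm : AEStronglyMeasurable (fun p : (Fin d → ℝ) × ℝ => p.1 a * p.2) D :=
    (((measurable_pi_apply a).comp measurable_fst).mul measurable_snd).aestronglyMeasurable
  refine Integrable.mono' (((hx2 a a).add hy2).div_const 2) hm (Filter.Eventually.of_forall ?_)
  intro p
  rw [Real.norm_eq_abs, abs_mul]
  simp only [Pi.add_apply]
  nlinarith [sq_nonneg (|p.1 a| - |p.2|), sq_abs (p.1 a), sq_abs p.2, abs_nonneg (p.1 a),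
    abs_nonneg p.2, sq_nonneg (p.1 a), sq_nonneg p.2]

lemma sgPos {d : ℕ} (D : Measure ((Fin d → ℝ) × ℝ)) [IsProbabilityMeasure D]
    (hx2 : ∀ a b : Fin d, Integrable (fun p => p.1 a * p.1 b) D)
    (Sg : Matrix (Fin d) (Fin d) ℝ)
    (hSg : Sg = Matrix.of fun i j => ∫ p, p.1 i * p.1 j ∂D)
    (hinv : IsUnit Sg.det) : 0 < Sg.det := by
  have hsymm : Sg.IsHermitian := by
    rw [Matrix.IsHermitian, Matrix.conjTranspose_eq_transpose_of_trivial]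
    ext a b
    rw [hSg]
    simp only [Matrix.transpose_apply, Matrix.of_apply]
    have : (fun p : (Fin d → ℝ) × ℝ => p.1 b * p.1 a) = fun p => p.1 a * p.1 b := by
      funext p; ring
    rw [this]
  have hpsd : Sg.PosSemidef := by
    refine Matrix.PosSemidef.of_dotProduct_mulVec_nonneg hsymm fun x => ?_
    have hxs : star x = x := by simp
    rw [hxs]
    have hint1 : ∀ a : Fin d, Integrable
        (fun p : (Fin d → ℝ) × ℝ => ∑ b, x a * x b * (p.1 a * p.1 b)) D :=
      fun a => integrable_finset_sum _ fun b _ => (hx2 a b).const_mul _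
    have hq : (∫ p, (∑ a, x a * p.1 a) ^ 2 ∂D)
        = ∑ a, ∑ b, x a * x b * (∫ p, p.1 a * p.1 b ∂D) := by
      have h1 : (fun p : (Fin d → ℝ) × ℝ => (∑ a, x a * p.1 a) ^ 2)
          = fun p => ∑ a, ∑ b, x a * x b * (p.1 a * p.1 b) := by
        funext p
        rw [sq, Finset.sum_mul_sum]
        refine Finset.sum_congr rfl fun a _ => Finset.sum_congr rfl fun b _ => by ring
      rw [h1, integral_finset_sum _ fun a _ => hint1 a]
      refine Finset.sum_congr rfl fun a _ => ?_
      rw [integral_finset_sum _ fun b _ => (hx2 a b).const_mul _]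
      exact Finset.sum_congr rfl fun b _ => integral_const_mul _ _
    have hdot : dotProduct x (Sg *ᵥ x)
        = ∑ a, ∑ b, x a * x b * (∫ p, p.1 a * p.1 b ∂D) := by
      rw [dotProduct]
      simp_rw [Matrix.mulVec, dotProduct, Finset.mul_sum]
      refine Finset.sum_congr rfl fun a _ => Finset.sum_congr rfl fun b _ => ?_
      rw [hSg]
      simp only [Matrix.of_apply]
      ring
    rw [hdot, ← hq]
    exact integral_nonneg fun p => sq_nonneg _
  have h0 : 0 ≤ Sg.det := psdDetNonneg hpsd
  exact lt_of_le_of_ne h0 (Ne.symm hinv.ne_zero)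

lemma measDet {d k : ℕ} : Measurable fun S : Fin k → (Fin d → ℝ) × ℝ =>
    (∑ τ, vecMulVec (S τ).1 (S τ).1).det := by
  have h1 : (fun S : Fin k → (Fin d → ℝ) × ℝ => (∑ τ, vecMulVec (S τ).1 (S τ).1).det)
      = fun S => ∑ σ : Equiv.Perm (Fin d), ((Equiv.Perm.sign σ : ℤ) : ℝ) *
          ∏ c, ∑ τ, (S τ).1 (σ c) * (S τ).1 c := by
    funext S
    rw [Matrix.det_apply']
    refine Finset.sum_congr rfl fun σ _ => ?_
    congr 1
    refine Finset.prod_congr rfl fun c _ => ?_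
    simp [Matrix.sum_apply, Matrix.vecMulVec_apply]
  rw [h1]
  refine Finset.measurable_sum _ fun σ _ => Measurable.const_mul ?_ _
  refine Finset.measurable_prod _ fun c _ => Finset.measurable_sum _ fun τ _ => ?_
  fun_prop

end VSaux

/-- For any `k ≥ d`, the least squares estimator of a size-`k`
volume-rescaled sample (with responses drawn conditionally) is unbiased. -/
theorem stmt10 (d k : ℕ) (hd : 0 < d) (hdk : d ≤ k)
    (D : Measure ((Fin d → ℝ) × ℝ)) [IsProbabilityMeasure D]
    (hx2 : ∀ i j : Fin d, Integrable (fun p => p.1 i * p.1 j) D)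
    (hy2 : Integrable (fun p => p.2 ^ 2) D)
    (Sg : Matrix (Fin d) (Fin d) ℝ)
    (hSg : Sg = Matrix.of fun i j => ∫ p, p.1 i * p.1 j ∂D)
    (hinv : IsUnit Sg.det) :
    (∫ S : Fin k → (Fin d → ℝ) × ℝ,
        (((Matrix.of fun i => (S i).1)ᵀ * Matrix.of fun i => (S i).1)⁻¹ *
            (Matrix.of fun i => (S i).1)ᵀ) *ᵥ (fun i => (S i).2)
        ∂((Measure.pi fun _ : Fin k => D).withDensity fun S =>
          ENNReal.ofReal ((∑ i, vecMulVec (S i).1 (S i).1).det /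
            ((Nat.factorial d : ℝ) * (Nat.choose k d : ℝ) * Sg.det))))
    = Sg⁻¹ *ᵥ (fun i => ∫ p, p.1 i * p.2 ∂D) := by
  classical
  have hxy : ∀ a : Fin d, Integrable (fun p : (Fin d → ℝ) × ℝ => p.1 a * p.2) D := intXY hx2 hy2
  set m : Fin d → ℝ := fun a => ∫ p, p.1 a * p.2 ∂D with hm
  set Z : ℝ := (Nat.factorial d : ℝ) * (Nat.choose k d : ℝ) * Sg.det with hZ
  have hdet_pos : 0 < Sg.det := sgPos D hx2 Sg hSg hinv
  have hfac_pos : (0:ℝ) < (Nat.factorial d : ℝ) := by exact_mod_cast Nat.factorial_pos d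
  have hch_pos : (0:ℝ) < (Nat.choose k d : ℝ) := by exact_mod_cast Nat.choose_pos hdk
  have hZpos : 0 < Z := by rw [hZ]; positivity
  have hfmeas : Measurable fun S : Fin k → (Fin d → ℝ) × ℝ =>
      Real.toNNReal ((∑ τ, vecMulVec (S τ).1 (S τ).1).det / Z) :=
    (measDet.div_const Z).real_toNNReal
  have hdens : (fun S : Fin k → (Fin d → ℝ) × ℝ =>
        ENNReal.ofReal ((∑ τ, vecMulVec (S τ).1 (S τ).1).det / Z))
      = fun S => ((Real.toNNReal ((∑ τ, vecMulVec (S τ).1 (S τ).1).det / Z) : NNReal) : ENNReal) :=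
    rfl
  rw [hdens, integral_withDensity_eq_integral_smul hfmeas]
  have hpoint : ∀ S : Fin k → (Fin d → ℝ) × ℝ,
      (Real.toNNReal ((∑ τ, vecMulVec (S τ).1 (S τ).1).det / Z)) •
        ((((Matrix.of fun τ => (S τ).1)ᵀ * Matrix.of fun τ => (S τ).1)⁻¹ *
            (Matrix.of fun τ => (S τ).1)ᵀ) *ᵥ fun τ => (S τ).2)
      = Z⁻¹ • fun i => ((Matrix.of fun τ => (S τ).1)ᵀ *
          ((Matrix.of fun τ => (S τ).1).updateCol i fun τ => (S τ).2)).det := by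
    intro S
    set X : Matrix (Fin k) (Fin d) ℝ := Matrix.of fun τ => (S τ).1 with hX
    set y : Fin k → ℝ := fun τ => (S τ).2 with hy
    have hAX : (∑ τ, vecMulVec (S τ).1 (S τ).1) = Xᵀ * X := by
      ext a b
      simp [Matrix.sum_apply, Matrix.vecMulVec_apply, Matrix.mul_apply, hX]
    rw [hAX, NNReal.smul_def, Real.coe_toNNReal _ (div_nonneg (detXtX_nonneg X) hZpos.le)]
    rw [div_eq_mul_inv, mul_comm, mul_smul]
    congr 1
    rw [← Matrix.smul_mulVec, ← Matrix.smul_mul, hadjX, ← Matrix.mulVec_mulVec,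
      ← Matrix.cramer_eq_adjugate_mulVec]
    funext i
    rw [Matrix.cramer_apply, hupdX]
  rw [show (fun S : Fin k → (Fin d → ℝ) × ℝ =>
      (Real.toNNReal ((∑ τ, vecMulVec (S τ).1 (S τ).1).det / Z)) •
        ((((Matrix.of fun τ => (S τ).1)ᵀ * Matrix.of fun τ => (S τ).1)⁻¹ *
            (Matrix.of fun τ => (S τ).1)ᵀ) *ᵥ fun τ => (S τ).2))
      = fun S => Z⁻¹ • (fun i => ((Matrix.of fun τ => (S τ).1)ᵀ *
          ((Matrix.of fun τ => (S τ).1).updateCol i fun τ => (S τ).2)).det : Fin d → ℝ)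
      from funext hpoint]
  rw [integral_smul]
  have hBi : ∀ (i : Fin d) (a c : Fin d), (Sg.updateCol i m) a c
      = if c = i then (∫ p, p.1 a * p.2 ∂D) else ∫ p, p.1 a * p.1 c ∂D := by
    intro i a c
    rw [Matrix.updateCol_apply]
    by_cases hc : c = i
    · simp [hc, hm]
    · simp [hc, hSg]
  have hvi := fun i : Fin d => coreInt (k := k) D hx2 hxy i (Sg.updateCol i m) (hBi i)
  have hsplit : (fun S : Fin k → (Fin d → ℝ) × ℝ =>
      (fun i => ((Matrix.of fun τ => (S τ).1)ᵀ *
        ((Matrix.of fun τ => (S τ).1).updateCol i fun τ => (S τ).2)).det : Fin d → ℝ))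
      = fun S => ∑ i : Fin d,
        (((Matrix.of fun τ => (S τ).1)ᵀ *
          ((Matrix.of fun τ => (S τ).1).updateCol i fun τ => (S τ).2)).det) •
          Pi.single i (1:ℝ) := by
    funext S j
    simp [Pi.single_apply]
  rw [hsplit, integral_finset_sum _ fun i _ => ((hvi i).1).smul_const _]
  rw [Finset.sum_congr rfl (fun i (_ : i ∈ Finset.univ) => by
    rw [integral_smul_const, (hvi i).2])]
  have hdet_ne : Sg.det ≠ 0 := hdet_pos.ne'
  funext j
  have hRHS : (Sg⁻¹ *ᵥ m) j = Sg.det⁻¹ * (Sg.updateCol j m).det := by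
    rw [Matrix.inv_def, Ring.inverse_eq_inv, Matrix.smul_mulVec,
      ← Matrix.cramer_eq_adjugate_mulVec]
    simp [Matrix.cramer_apply]
  rw [hRHS]
  simp only [Pi.smul_apply, Finset.sum_apply, Pi.single_apply, smul_eq_mul, mul_ite, mul_one,
    mul_zero, Finset.sum_ite_eq, Finset.mem_univ, if_true]
  rw [hZ]
  push_cast
  field_simp
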